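/- Let x, y, z, w be elements of the commutative ring ℤ[t,t⁻¹,z] and let B = [[x,y],[z,w]] and A = [[1-t,t],[1,0]]. If AB = BA, (considering 3×3 embeddings) A₂A₁B₂ = B₁A₂A₁ and A₁A₂B₁ = B₂A₁A₂ (where A₁,B₁ act on coordinates 1,2 and A₂,B₂ on coordinates 2,3 of 3×3 matrices), then x + y = 1, w + z = 1, y = tz, and x = 1 - tz; i.e., B = [[1-tz, tz],[z, 1-z]]. -/

import Mathlib

/-- The ground ring `ℤ[t,t⁻¹,z]`: polynomials in `z` over Laurent polynomials in `t`. -/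
noncomputable abbrev R : Type := Polynomial (LaurentPolynomial ℤ)

/-- The Laurent variable `t`. -/
noncomputable def t : R := Polynomial.C (LaurentPolynomial.T 1)

/-- The polynomial variable `z`. -/
noncomputable def z : R := Polynomial.X

/-- The `n × n` unreduced Burau matrix of the braid generator `σ_i` (1-based index `i`):
identity except for the block `[[1-t, t],[1, 0]]` at rows/columns `i, i+1`. -/
noncomputable def burauA (n i : ℕ) : Matrix (Fin n) (Fin n) R :=
  Matrix.of fun p q =>
    if (p : ℕ) + 1 = i ∧ (q : ℕ) + 1 = i then 1 - t
    else if (p : ℕ) + 1 = i ∧ (q : ℕ) = i then t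
    else if (p : ℕ) = i ∧ (q : ℕ) + 1 = i then 1
    else if (p : ℕ) = i ∧ (q : ℕ) = i then 0
    else if p = q then 1 else 0

/-- The `n × n` bonded Burau matrix of the bond generator `b_i` (1-based index `i`):
identity except for the block `[[1-tz, tz],[z, 1-z]]` at rows/columns `i, i+1`. -/
noncomputable def burauB (n i : ℕ) : Matrix (Fin n) (Fin n) R :=
  Matrix.of fun p q =>
    if (p : ℕ) + 1 = i ∧ (q : ℕ) + 1 = i then 1 - t * z
    else if (p : ℕ) + 1 = i ∧ (q : ℕ) = i then t * z
    else if (p : ℕ) = i ∧ (q : ℕ) + 1 = i then z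
    else if (p : ℕ) = i ∧ (q : ℕ) = i then 1 - z
    else if p = q then 1 else 0

lemma one_sub_t_ne_zero : (1 : R) - t ≠ 0 := by
  rw [sub_ne_zero]
  intro h
  have h2 : (1 : LaurentPolynomial ℤ) = LaurentPolynomial.T 1 :=
    Polynomial.C_injective (by simpa [t] using h)
  rw [← LaurentPolynomial.T_zero] at h2
  have h3 : (0 : ℤ) = 1 := by
    have := congrArg (fun p : LaurentPolynomial ℤ => p.coeff 0) h2
    simp at this
  exact absurd h3 (by norm_num)

/-- characterization of the bonded Burau matrix. If `B = [[x,y],[c,w]]`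
commutes with the Burau block `A` ((M2)), and the 3×3 embeddings satisfy
`A₂A₁B₂ = B₁A₂A₁` ((M3)) and `A₁A₂B₁ = B₂A₁A₂` ((M4)), then
`x + y = 1`, `w + c = 1`, `y = t·c`, `x = 1 - t·c`, i.e. `B = [[1-tc, tc],[c, 1-c]]`. -/
theorem bond_matrix_characterization (x y c w : R)
    (hM2 : !![1 - t, t; 1, 0] * !![x, y; c, w] = !![x, y; c, w] * !![1 - t, t; 1, 0])
    (hM3 : (!![1, 0, 0; 0, 1 - t, t; 0, 1, 0] : Matrix (Fin 3) (Fin 3) R) *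
        !![1 - t, t, 0; 1, 0, 0; 0, 0, 1] * !![1, 0, 0; 0, x, y; 0, c, w] =
        !![x, y, 0; c, w, 0; 0, 0, 1] *
        (!![1, 0, 0; 0, 1 - t, t; 0, 1, 0] * !![1 - t, t, 0; 1, 0, 0; 0, 0, 1]))
    (hM4 : (!![1 - t, t, 0; 1, 0, 0; 0, 0, 1] : Matrix (Fin 3) (Fin 3) R) *
        !![1, 0, 0; 0, 1 - t, t; 0, 1, 0] * !![x, y, 0; c, w, 0; 0, 0, 1] =
        !![1, 0, 0; 0, x, y; 0, c, w] *
        (!![1 - t, t, 0; 1, 0, 0; 0, 0, 1] * !![1, 0, 0; 0, 1 - t, t; 0, 1, 0])) :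
    x + y = 1 ∧ w + c = 1 ∧ y = t * c ∧ x = 1 - t * c := by
  have h00 := congrFun (congrFun hM3 0) 0
  have h10 := congrFun (congrFun hM3 1) 0
  have g00 := congrFun (congrFun hM4 0) 0
  have g01 := congrFun (congrFun hM4 0) 1
  simp [Matrix.mul_apply, Fin.sum_univ_three, Matrix.vecHead, Matrix.vecTail]
    at h00 h10 g00 g01
  have e1 : x + y = 1 := mul_right_cancel₀ one_sub_t_ne_zero
    (by linear_combination -h00 : (x + y) * (1 - t) = 1 * (1 - t))
  have e2 : c + w = 1 := mul_right_cancel₀ one_sub_t_ne_zero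
    (by linear_combination -h10 : (c + w) * (1 - t) = 1 * (1 - t))
  have e3 : x + t * c = 1 := mul_right_cancel₀ one_sub_t_ne_zero
    (by linear_combination g00 : (x + t * c) * (1 - t) = 1 * (1 - t))
  have e4 : y + t * w = t := mul_right_cancel₀ one_sub_t_ne_zero
    (by linear_combination g01 : (y + t * w) * (1 - t) = t * (1 - t))
  exact ⟨e1, by linear_combination e2, by linear_combination e4 - t * e2,
    by linear_combination e3⟩
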